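/- Every P-recursive sequence over ℚ is ratrec: let d ≥ 1, let P_0, …, P_d ∈ ℚ[x] be univariate polynomials such that P_d(n) ≠ 0 for every n ∈ ℕ, and let a : ℕ → ℚ be a sequence satisfying P_0(n)·a_n + P_1(n)·a_{n+1} + ⋯ + P_d(n)·a_{n+d} = 0 for all n ∈ ℕ. Then a is ratrec. -/
import Mathlib

/-- A sequence `u : ℕ → F` over a field `F` is ratrec of dimension `k` if there
are sequences `u^(1) = u, …, u^(k)` and polynomials `A_i, B_i` such that each
`u^(i)_{n+1} = A_i(u^(1)_n,…,u^(k)_n) / B_i(u^(1)_n,…,u^(k)_n)` with nonzero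
denominators. -/
def IsRatRec {F : Type*} [Field F] (u : ℕ → F) : Prop :=
  ∃ (k : ℕ) (hk : 0 < k) (U : Fin k → ℕ → F)
    (A B : Fin k → MvPolynomial (Fin k) F),
    (∀ n : ℕ, U ⟨0, hk⟩ n = u n) ∧
    ∀ (n : ℕ) (i : Fin k),
      MvPolynomial.eval (fun j => U j n) (B i) ≠ 0 ∧
      U i (n + 1) =
        MvPolynomial.eval (fun j => U j n) (A i) /
          MvPolynomial.eval (fun j => U j n) (B i)

lemma eval_polyX {k : ℕ} (f : Fin k → ℚ) (i : Fin k) (p : Polynomial ℚ) :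
    MvPolynomial.eval f (p.eval₂ MvPolynomial.C (MvPolynomial.X i)) = p.eval (f i) := by
  rw [Polynomial.hom_eval₂]
  simp only [MvPolynomial.eval_X]
  have : (MvPolynomial.eval f).comp (MvPolynomial.C : ℚ →+* _) = RingHom.id ℚ := by
    ext x; simp
  rw [this, Polynomial.eval]

/-- every P-recursive sequence over ℚ is ratrec. -/
theorem p_recursive_is_ratrec
    (d : ℕ) (hd : 0 < d) (P : Fin (d + 1) → Polynomial ℚ)
    (hPd : ∀ n : ℕ, (P (Fin.last d)).eval (n : ℚ) ≠ 0)
    (a : ℕ → ℚ)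
    (ha : ∀ n : ℕ, ∑ j : Fin (d + 1), (P j).eval (n : ℚ) * a (n + j) = 0) :
    IsRatRec a := by
  classical
  refine ⟨d + 1, Nat.succ_pos d,
    fun i n => if (i : ℕ) < d then a (n + i) else (n : ℚ),
    fun i => if h : (i : ℕ) + 1 < d then MvPolynomial.X ⟨(i : ℕ) + 1, by omega⟩
      else if (i : ℕ) + 1 = d then
        -(∑ j : Fin d, ((P j.castSucc).eval₂ MvPolynomial.C
            (MvPolynomial.X (Fin.last d))) * MvPolynomial.X j.castSucc)
      else MvPolynomial.X (Fin.last d) + 1,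
    fun i => if (i : ℕ) + 1 = d then
        (P (Fin.last d)).eval₂ MvPolynomial.C (MvPolynomial.X (Fin.last d))
      else 1,
    ?_, ?_⟩
  · intro n; simp [hd]
  · intro n i
    set pt : Fin (d + 1) → ℚ :=
      fun j => if (j : ℕ) < d then a (n + j) else (n : ℚ) with hpt
    have hptlast : pt (Fin.last d) = (n : ℚ) := by simp [hpt]
    rcases lt_trichotomy ((i : ℕ) + 1) d with h1 | h2 | h3
    · have hne : (i : ℕ) + 1 ≠ d := by omega
      constructor
      · simp [hne]
      · simp only [dif_pos h1, if_neg hne, MvPolynomial.eval_X, map_one, div_one]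
        simp only [hpt]
        rw [if_pos (by omega : (i : ℕ) < d)]
        rw [if_pos (by simpa using h1 : ((⟨(i:ℕ)+1, by omega⟩ : Fin (d+1)) : ℕ) < d)]
        congr 1
        show n + 1 + (i : ℕ) = n + ((i : ℕ) + 1)
        omega
    · have hnl : ¬ ((i : ℕ) + 1 < d) := by omega
      constructor
      · simp only [if_pos h2]
        rw [eval_polyX, hptlast]
        exact hPd n
      · simp only [dif_neg hnl, if_pos h2]
        rw [if_pos (by omega : (i : ℕ) < d)]
        have hai : n + 1 + (i : ℕ) = n + d := by omega
        rw [hai]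
        rw [eval_polyX, hptlast]
        rw [map_neg, map_sum]
        have hsum : ∀ j : Fin d,
            MvPolynomial.eval pt ((P j.castSucc).eval₂ MvPolynomial.C
              (MvPolynomial.X (Fin.last d)) * MvPolynomial.X j.castSucc)
            = (P j.castSucc).eval (n : ℚ) * a (n + j) := by
          intro j
          rw [map_mul, eval_polyX, hptlast, MvPolynomial.eval_X]
          simp [hpt, j.isLt, Fin.coe_castSucc]
        rw [Finset.sum_congr rfl fun j _ => hsum j]
        have hrec := ha n
        rw [Fin.sum_univ_castSucc] at hrec
        have hlast : ((Fin.last d : Fin (d+1)) : ℕ) = d := rfl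
        rw [hlast] at hrec
        simp only [Fin.coe_castSucc] at hrec
        rw [eq_div_iff (hPd n)]
        linarith [hrec]
    · have hi : (i : ℕ) = d := by omega
      have hne : (i : ℕ) + 1 ≠ d := by omega
      have hnl : ¬ ((i : ℕ) + 1 < d) := by omega
      constructor
      · simp [hne]
      · simp only [dif_neg hnl, if_neg hne, map_add, MvPolynomial.eval_X,
          map_one, div_one]
        rw [if_neg (by omega : ¬ (i : ℕ) < d), hptlast]
        push_cast
        ring
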